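/- Let L = det((X_{ij})_{1≤i,j≤ℓ}) be the leading maximal minor of the generic ℓ×ℓ' matrix X, let M be an ℓ'×ℓ matrix over F_q of rank ℓ, and let m be an ℓ×ℓ matrix over F_q. Then det(XM + m) = L if and only if m = 0 and there exists a (necessarily unique) E ∈ SL_ℓ(F_q) such that ME equals the ℓ'×ℓ matrix whose top ℓ×ℓ block is the identity and whose bottom (ℓ'−ℓ)×ℓ block is zero. -/

import Mathlib

open MvPolynomial Matrix

/-- The generic `ℓ × ℓ'` matrix of indeterminates. -/
noncomputable def genMatrixRect (F : Type*) [Field F] (ℓ ℓ' : ℕ) :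
    Matrix (Fin ℓ) (Fin ℓ') (MvPolynomial (Fin ℓ × Fin ℓ') F) :=
  Matrix.of fun i j => X (i, j)

private lemma map_algebraMap_self {F : Type*} [Field F] {a b : Type*}
    (B : Matrix a b F) : B.map (algebraMap F F) = B := by
  ext i j; simp [Matrix.map_apply]

private lemma eval_identity {F : Type*} [Field F] {ℓ ℓ' : ℕ} (hℓℓ' : ℓ ≤ ℓ')
    (M : Matrix (Fin ℓ') (Fin ℓ) F) (m : Matrix (Fin ℓ) (Fin ℓ) F)
    (h : (genMatrixRect F ℓ ℓ' * M.map C + m.map C).det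
        = ((genMatrixRect F ℓ ℓ').submatrix id (Fin.castLE hℓℓ')).det)
    (R : Type*) [CommRing R] [Algebra F R] (A : Matrix (Fin ℓ) (Fin ℓ') R) :
    (A * M.map (algebraMap F R) + m.map (algebraMap F R)).det
      = (A.submatrix id (Fin.castLE hℓℓ')).det := by
  have h2 := congrArg (aeval (R := F) (S₁ := R) fun p : Fin ℓ × Fin ℓ' => A p.1 p.2) h
  rw [AlgHom.map_det, AlgHom.map_det] at h2
  convert h2 using 2
  · ext i j
    simp [Matrix.map_apply, Matrix.mul_apply, Matrix.add_apply, genMatrixRect, map_sum]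
    erw [Matrix.mul_apply]
    simp [map_sum, Matrix.map_apply]
  · ext i j
    simp [Matrix.map_apply, genMatrixRect]

private lemma left_inv_of_rank {F : Type*} [Field F] {ℓ ℓ' : ℕ}
    (M : Matrix (Fin ℓ') (Fin ℓ) F) (hM : M.rank = ℓ) :
    ∃ N : Matrix (Fin ℓ) (Fin ℓ') F, N * M = 1 := by
  have hker : LinearMap.ker M.mulVecLin = ⊥ := by
    have h1 := LinearMap.finrank_range_add_finrank_ker M.mulVecLin
    rw [Matrix.rank] at hM
    rw [hM] at h1
    simp only [Module.finrank_pi, Fintype.card_fin] at h1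
    have : Module.finrank F (LinearMap.ker M.mulVecLin) = 0 := by omega
    exact Submodule.finrank_eq_zero.mp this
  obtain ⟨g, hg⟩ := LinearMap.exists_leftInverse_of_injective M.mulVecLin hker
  refine ⟨LinearMap.toMatrix' g, ?_⟩
  have : M.mulVecLin = Matrix.toLin' M := rfl
  calc LinearMap.toMatrix' g * M
      = LinearMap.toMatrix' g * LinearMap.toMatrix' (Matrix.toLin' M) := by
        rw [LinearMap.toMatrix'_toLin']
    _ = LinearMap.toMatrix' (g.comp (Matrix.toLin' M)) := (LinearMap.toMatrix'_comp _ _).symm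
    _ = 1 := by rw [← this, hg, LinearMap.toMatrix'_id]

private lemma m_eq_zero {F : Type*} [Field F] {ℓ : ℕ} (m : Matrix (Fin ℓ) (Fin ℓ) F) (c : F)
    (h : ∀ A : Matrix (Fin ℓ) (Fin ℓ) F, (A + m).det = A.det * c) : m = 0 := by
  by_contra hm
  obtain ⟨i, l, hil⟩ : ∃ i l, m i l ≠ 0 := by
    by_contra hc
    push_neg at hc
    exact hm (by ext i j; exact hc i j)
  set u : Fin ℓ → F := fun r => m r l with hu
  set σ : Equiv.Perm (Fin ℓ) := Equiv.swap i l with hσ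
  set S : Matrix (Fin ℓ) (Fin ℓ) F := σ.permMatrix F with hS
  set A : Matrix (Fin ℓ) (Fin ℓ) F := S.updateCol l (-u) with hA
  have hdetA : A.det = S.cramer (-u) l := (Matrix.cramer_apply _ _ _).symm
  have hmv := Matrix.mulVec_cramer S (-u)
  have hSv : ∀ v : Fin ℓ → F, (S *ᵥ v) i = v l := by
    intro v
    simp [hS, Matrix.mulVec, dotProduct, Equiv.Perm.permMatrix,
      PEquiv.toMatrix_apply, Equiv.toPEquiv_apply, hσ, Equiv.swap_apply_left]
  have h1 : S.cramer (-u) l = S.det * (-u i) := by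
    have := congrFun hmv i
    rw [hSv] at this
    simpa using this
  have hdetS : S.det ≠ 0 := by
    rw [hS, Matrix.det_permutation]
    rcases Int.units_eq_one_or (Equiv.Perm.sign σ) with h' | h' <;> simp [h']
  have hdetA0 : A.det ≠ 0 := by
    rw [hdetA, h1]
    intro hz
    rcases mul_eq_zero.mp hz with h' | h'
    · exact hdetS h'
    · rw [neg_eq_zero] at h'; exact hil h'
  have hzero : (A + m).det = 0 := by
    apply Matrix.det_eq_zero_of_column_eq_zero l
    intro r
    simp [hA, Matrix.updateCol_self, hu]
  have hc0 : c = 0 := by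
    have := h A
    rw [hzero] at this
    exact (mul_eq_zero.mp this.symm).resolve_left hdetA0
  have := h (1 - m)
  rw [sub_add_cancel, hc0, mul_zero, Matrix.det_one] at this
  exact one_ne_zero this

private lemma exists_unique_E {F : Type*} [Field F] {ℓ ℓ' : ℕ} (hℓℓ' : ℓ ≤ ℓ')
    (M : Matrix (Fin ℓ') (Fin ℓ) F)
    (HF : ∀ A : Matrix (Fin ℓ) (Fin ℓ') F,
      (A * M).det = (A.submatrix id (Fin.castLE hℓℓ')).det) :
    ∃! E : Matrix (Fin ℓ) (Fin ℓ) F, E.det = 1 ∧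
      ∀ (i : Fin ℓ') (j : Fin ℓ), (M * E) i j = if (i : ℕ) = (j : ℕ) then 1 else 0 := by
  set Jt : Matrix (Fin ℓ) (Fin ℓ') F :=
    Matrix.of fun i k => if k = Fin.castLE hℓℓ' i then (1 : F) else 0 with hJt
  set Mtop : Matrix (Fin ℓ) (Fin ℓ) F := M.submatrix (Fin.castLE hℓℓ') id with hMtopdef
  have hJtM : Jt * M = Mtop := by
    ext i j
    simp [Matrix.mul_apply, hJt, ite_mul, hMtopdef]
  have hJtL : Jt.submatrix id (Fin.castLE hℓℓ') = 1 := by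
    ext i j
    simp only [Matrix.submatrix_apply, hJt, Matrix.of_apply, id_eq, Matrix.one_apply]
    simp [Fin.castLE_inj, eq_comm]
  have hMtop : Mtop.det = 1 := by
    have := HF Jt
    rwa [hJtM, hJtL, Matrix.det_one] at this
  have hrow : ∀ i₀ : Fin ℓ', ℓ ≤ (i₀ : ℕ) → M i₀ = 0 := by
    intro i₀ hi₀
    have hk : ∀ k : Fin ℓ, (Mtop.updateRow k (M i₀)).det = 0 := by
      intro k
      have h1 : (Jt.updateRow k (Pi.single i₀ 1)) * M = Mtop.updateRow k (M i₀) := by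
        ext i j
        by_cases hik : i = k
        · subst hik
          simp [Matrix.mul_apply, Matrix.updateRow_self, Pi.single_apply, ite_mul]
        · simp [Matrix.mul_apply, Matrix.updateRow_ne hik, hJt, ite_mul, hMtopdef]
      have h2 : (Jt.updateRow k (Pi.single i₀ 1)).submatrix id (Fin.castLE hℓℓ')
          = (1 : Matrix (Fin ℓ) (Fin ℓ) F).updateRow k 0 := by
        ext i j
        by_cases hik : i = k
        · subst hik
          have hne : Fin.castLE hℓℓ' j ≠ i₀ := by
            intro hcon
            have : (j : ℕ) = (i₀ : ℕ) := congrArg Fin.val hcon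
            omega
          simp [Matrix.submatrix_apply, Matrix.updateRow_self, Pi.single_apply, hne]
        · simp only [Matrix.submatrix_apply, id_eq, Matrix.updateRow_ne hik, hJt,
            Matrix.of_apply, Matrix.one_apply]
          simp [Fin.castLE_inj, eq_comm]
      have := HF (Jt.updateRow k (Pi.single i₀ 1))
      rw [h1, h2] at this
      rw [this]
      exact Matrix.det_eq_zero_of_row_eq_zero k (by simp)
    have hcr : Mtopᵀ.cramer (M i₀) = 0 := by
      funext k
      rw [Matrix.cramer_transpose_apply]
      exact hk k
    have hmv := Matrix.mulVec_cramer Mtopᵀ (M i₀)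
    rw [hcr, Matrix.mulVec_zero, Matrix.det_transpose, hMtop, one_smul] at hmv
    exact hmv.symm
  have hunit : IsUnit Mtop.det := by rw [hMtop]; exact isUnit_one
  have hME : Mtop * Mtop⁻¹ = 1 := Matrix.mul_nonsing_inv _ hunit
  have hdetE : (Mtop⁻¹).det = 1 := by
    rw [Matrix.det_nonsing_inv, hMtop, Ring.inverse_one]
  have hent : ∀ (i : Fin ℓ') (j : Fin ℓ),
      (M * Mtop⁻¹) i j = if (i : ℕ) = (j : ℕ) then 1 else 0 := by
    intro i j
    by_cases hi : (i : ℕ) < ℓ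
    · set i' : Fin ℓ := ⟨i, hi⟩ with hi'
      have hcast : Fin.castLE hℓℓ' i' = i := rfl
      have he : (M * Mtop⁻¹) i j = (Mtop * Mtop⁻¹) i' j := by
        simp [Matrix.mul_apply, hMtopdef, Matrix.submatrix_apply, hcast]
      rw [he, hME, Matrix.one_apply]
      have hiff : (i' = j) ↔ ((i : ℕ) = (j : ℕ)) := by
        rw [Fin.ext_iff]
      simp [hiff]
    · have h0 : M i = 0 := hrow i (le_of_not_gt hi)
      have hz : (M * Mtop⁻¹) i j = 0 := by
        rw [Matrix.mul_apply]
        apply Finset.sum_eq_zero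
        intro k _
        rw [congrFun h0 k]
        simp
      rw [hz, if_neg]
      intro hcon
      have := j.isLt
      omega
  refine ⟨Mtop⁻¹, ⟨hdetE, hent⟩, ?_⟩
  rintro E' ⟨hdet', hent'⟩
  have hME' : Mtop * E' = 1 := by
    ext i' j
    have h := hent' (Fin.castLE hℓℓ' i') j
    have hcond : ((Fin.castLE hℓℓ' i' : Fin ℓ') : ℕ) = (j : ℕ) ↔ i' = j := by
      simp [Fin.ext_iff]
    have hmm : (M * E') (Fin.castLE hℓℓ' i') j = (Mtop * E') i' j := by
      simp [Matrix.mul_apply, hMtopdef, Matrix.submatrix_apply]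
    rw [hmm] at h
    rw [h, Matrix.one_apply]
    by_cases hc : i' = j
    · simp [hc]
    · rw [if_neg hc, if_neg (fun hcon => hc (hcond.mp hcon))]
  exact (Matrix.inv_eq_right_inv hME').symm

theorem det_mul_add_eq_leading_minor_iff (F : Type*) [Field F] [Fintype F]
    (ℓ ℓ' : ℕ) (hℓ : 1 ≤ ℓ) (hℓℓ' : ℓ ≤ ℓ')
    (M : Matrix (Fin ℓ') (Fin ℓ) F) (hM : M.rank = ℓ) (m : Matrix (Fin ℓ) (Fin ℓ) F) :
    (genMatrixRect F ℓ ℓ' * M.map C + m.map C).det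
        = ((genMatrixRect F ℓ ℓ').submatrix id (Fin.castLE hℓℓ')).det
      ↔ (m = 0 ∧ ∃! E : Matrix (Fin ℓ) (Fin ℓ) F, E.det = 1 ∧
          ∀ (i : Fin ℓ') (j : Fin ℓ), (M * E) i j = if (i : ℕ) = (j : ℕ) then 1 else 0) := by
  constructor
  · intro h
    obtain ⟨N, hN⟩ := left_inv_of_rank M hM
    have hrawF : ∀ A : Matrix (Fin ℓ) (Fin ℓ') F,
        (A * M + m).det = (A.submatrix id (Fin.castLE hℓℓ')).det := by
      intro A
      have := eval_identity hℓℓ' M m h F A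
      rwa [map_algebraMap_self, map_algebraMap_self] at this
    have hkey : ∀ Y : Matrix (Fin ℓ) (Fin ℓ) F,
        (Y + m).det = Y.det * (N.submatrix id (Fin.castLE hℓℓ')).det := by
      intro Y
      have h1 := hrawF (Y * N)
      rw [Matrix.mul_assoc, hN, Matrix.mul_one] at h1
      have h2 : (Y * N).submatrix id (Fin.castLE hℓℓ')
          = Y * N.submatrix id (Fin.castLE hℓℓ') := by
        ext i j
        simp [Matrix.mul_apply, Matrix.submatrix_apply]
      rw [h2, Matrix.det_mul] at h1
      exact h1
    have hm0 : m = 0 := m_eq_zero m _ hkey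
    subst hm0
    refine ⟨rfl, ?_⟩
    apply exists_unique_E hℓℓ' M
    intro A
    have := hrawF A
    rwa [add_zero] at this
  · rintro ⟨hm0, E, ⟨hdetE, hent⟩, -⟩
    subst hm0
    have hunit : IsUnit E.det := by rw [hdetE]; exact isUnit_one
    set J : Matrix (Fin ℓ') (Fin ℓ) F :=
      Matrix.of fun i j => if (i : ℕ) = (j : ℕ) then (1 : F) else 0 with hJ
    have hME : M * E = J := by
      ext i j
      exact hent i j
    have hMeq : M = J * E⁻¹ := by
      rw [← hME, Matrix.mul_assoc, Matrix.mul_nonsing_inv _ hunit, Matrix.mul_one]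
    have hXJ : genMatrixRect F ℓ ℓ' * J.map C
        = (genMatrixRect F ℓ ℓ').submatrix id (Fin.castLE hℓℓ') := by
      ext i j : 1
      erw [Matrix.mul_apply]
      rw [Finset.sum_eq_single (Fin.castLE hℓℓ' j)]
      · simp [genMatrixRect, hJ, Matrix.map_apply]
      · intro k _ hk
        have : ¬((k : ℕ) = (j : ℕ)) := by
          intro hcon
          exact hk (Fin.ext hcon)
        simp [hJ, Matrix.map_apply, this]
      · intro hcon
        exact absurd (Finset.mem_univ _) hcon
    have hdetinv : (E⁻¹).det = 1 := by
      rw [Matrix.det_nonsing_inv, hdetE, Ring.inverse_one]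
    rw [hMeq]
    rw [show ((0 : Matrix (Fin ℓ) (Fin ℓ) F).map C) = 0 by ext; simp, add_zero]
    have hd : ((E⁻¹).map (C : F →+* MvPolynomial (Fin ℓ × Fin ℓ') F)).det = 1 := by
      have hd0 := (RingHom.map_det (C : F →+* MvPolynomial (Fin ℓ × Fin ℓ') F) (E⁻¹)).symm
      rw [RingHom.mapMatrix_apply] at hd0
      rw [hd0, hdetinv, _root_.map_one]
    rw [Matrix.map_mul]
    erw [← Matrix.mul_assoc, hXJ]
    rw [Matrix.det_mul, hd, mul_one]
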